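/- arXiv:2412.04758 — 3 statements merged into one kernel-verified Lean document; each statement's English description precedes it below -/
import Mathlib

section
/- Maximum entropy goal-directedness is translation and scale invariant: if two finite decision problems are identical except that the utility function of the second is U₂ = a·U₁ + b for real numbers a ≠ 0 and b, then for every policy π, MEG with respect to U₁ equals MEG with respect to U₂. -/
open Finset Real

variable {S D : Type*}

/-- `p` is a probability distribution on a finite type. -/
def IsDist [Fintype D] (p : D → ℝ) : Prop := (∀ d, 0 ≤ p d) ∧ ∑ d, p d = 1

/-- A policy assigns a distribution over actions to every state. -/
def IsPolicy [Fintype D] (q0 : S → D → ℝ) : Prop := ∀ s, IsDist (q0 s)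

/-- Expected utility of policy `q0` under state distribution `P` and utility `U`. -/
def expUtil [Fintype S] [Fintype D] (P : S → ℝ) (q0 : S → D → ℝ) (U : S → D → ℝ) : ℝ :=
  ∑ s, P s * ∑ d, q0 s d * U s d

/-- Conditional (causal) entropy of a policy. -/
noncomputable def condEnt [Fintype S] [Fintype D] (P : S → ℝ) (q0 : S → D → ℝ) : ℝ :=
  -∑ s, P s * ∑ d, q0 s d * Real.log (q0 s d)

/-- The maximum-entropy policy set for utility `U`: policies that maximize conditional
entropy among all policies attaining the same expected utility. -/
def maxentSet [Fintype S] [Fintype D] (P : S → ℝ) (U : S → D → ℝ) : Set (S → D → ℝ) :=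
  {q1 | IsPolicy q1 ∧ ∀ q2, IsPolicy q2 → expUtil P q2 U = expUtil P q1 U →
    condEnt P q2 ≤ condEnt P q1}

/-- Predictive accuracy of `q1` for predicting `q0`, relative to the uniform policy. -/
noncomputable def predAcc [Fintype S] [Fintype D] (P : S → ℝ) (q0 q1 : S → D → ℝ) : ℝ :=
  ∑ s, P s * ∑ d, q0 s d * (Real.log (q1 s d) + Real.log (Fintype.card D))

/-- Maximum entropy goal-directedness of `q0` with respect to utility `U`. -/
noncomputable def MEG [Fintype S] [Fintype D] (P : S → ℝ) (U : S → D → ℝ) (q0 : S → D → ℝ) : ℝ :=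
  sSup {x | ∃ q1 ∈ maxentSet P U, x = predAcc P q0 q1}


lemma expUtil_affine [Fintype S] [Fintype D] (P : S → ℝ) (U : S → D → ℝ) (a b : ℝ)
    (q : S → D → ℝ) (hq : IsPolicy q) :
    expUtil P q (fun s d => a * U s d + b) = a * expUtil P q U + b * ∑ s, P s := by
  unfold expUtil
  rw [Finset.mul_sum, Finset.mul_sum, ← Finset.sum_add_distrib]
  refine Finset.sum_congr rfl fun s _ => ?_
  have h1 : ∑ d, q s d = 1 := (hq s).2
  have : ∑ d, q s d * (a * U s d + b) = a * (∑ d, q s d * U s d) + b := by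
    calc ∑ d, q s d * (a * U s d + b)
        = ∑ d, (a * (q s d * U s d) + b * q s d) :=
          Finset.sum_congr rfl fun d _ => by ring
      _ = a * (∑ d, q s d * U s d) + b * ∑ d, q s d := by
          rw [Finset.sum_add_distrib, ← Finset.mul_sum, ← Finset.mul_sum]
      _ = a * (∑ d, q s d * U s d) + b := by rw [h1, mul_one]
  rw [this]; ring

lemma maxentSet_affine [Fintype S] [Fintype D] (P : S → ℝ) (U : S → D → ℝ) (a b : ℝ)
    (ha : a ≠ 0) :
    maxentSet P U = maxentSet P (fun s d => a * U s d + b) := by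
  ext q1
  constructor <;> rintro ⟨hq1, h⟩ <;> refine ⟨hq1, fun q2 hq2 he => h q2 hq2 ?_⟩
  · rw [expUtil_affine P U a b q2 hq2, expUtil_affine P U a b q1 hq1] at he
    exact mul_left_cancel₀ ha (by linarith)
  · rw [expUtil_affine P U a b q2 hq2, expUtil_affine P U a b q1 hq1, he]

/-- MEG is translation and scale invariant. -/
theorem meg_translation_scale_invariant [Fintype S] [Fintype D]
    (P : S → ℝ) (hP : IsDist P)
    (U₁ : S → D → ℝ) (a b : ℝ) (ha : a ≠ 0)
    (pol : S → D → ℝ) (hpol : IsPolicy pol) :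
    MEG P U₁ pol = MEG P (fun s d => a * U₁ s d + b) pol := by
  unfold MEG
  rw [maxentSet_affine P U₁ a b ha]
end

section
/- No goal-directedness without causal influence: if the utility function does not depend on the action, i.e., U(s,d) = U(s,d') for all s and all d, d', then MEG_U(π) = 0 for every policy π. -/
open Finset Real

variable {S D : Type*}

lemma ent_le_log_card' [Fintype D] [Nonempty D] (q : D → ℝ) (h0 : ∀ d, 0 ≤ q d)
    (h1 : ∑ d, q d = 1) :
    ∑ d, Real.negMulLog (q d) ≤ Real.log (Fintype.card D) := by
  have hn : (0:ℝ) < Fintype.card D := by positivity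
  have key := strictConcaveOn_negMulLog.concaveOn.le_map_sum
    (t := Finset.univ) (w := fun _ : D => (Fintype.card D : ℝ)⁻¹) (p := q)
    (fun i _ => by positivity) (by simp) (fun i _ => h0 i)
  simp only [smul_eq_mul, ← Finset.mul_sum, h1, mul_one] at key
  have h2 : Real.negMulLog ((Fintype.card D : ℝ)⁻¹)
      = (Fintype.card D : ℝ)⁻¹ * Real.log (Fintype.card D) := by
    simp [Real.negMulLog, Real.log_inv]
  rw [h2] at key
  exact le_of_mul_le_mul_left key (by positivity)

lemma uniform_of_log_card_le_ent [Fintype D] [Nonempty D] (q : D → ℝ) (h0 : ∀ d, 0 ≤ q d)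
    (h1 : ∑ d, q d = 1) (hle : Real.log (Fintype.card D) ≤ ∑ d, Real.negMulLog (q d)) :
    ∀ d, q d = (Fintype.card D : ℝ)⁻¹ := by
  have hn : (0:ℝ) < Fintype.card D := by positivity
  have h2 : Real.negMulLog ((Fintype.card D : ℝ)⁻¹)
      = (Fintype.card D : ℝ)⁻¹ * Real.log (Fintype.card D) := by
    simp [Real.negMulLog, Real.log_inv]
  have heq := strictConcaveOn_negMulLog.eq_of_map_sum_eq
    (t := Finset.univ) (w := fun _ : D => (Fintype.card D : ℝ)⁻¹) (p := q)
    (fun i _ => by positivity) (by simp) (fun i _ => h0 i)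
    (by
      simp only [smul_eq_mul, ← Finset.mul_sum, h1, mul_one, h2]
      exact mul_le_mul_of_nonneg_left hle (by positivity))
  intro d
  have hconst : ∀ d', q d' = q d := fun d' => heq (mem_univ d') (mem_univ d)
  have hsum : ∑ d' : D, q d' = (Fintype.card D : ℝ) * q d := by
    rw [Finset.sum_congr rfl (fun d' _ => hconst d')]
    simp [mul_comm]
  rw [h1] at hsum
  field_simp
  linarith

/-- no goal-directedness without causal influence. If the utility does not
depend on the action, then MEG is zero for every policy. -/
theorem meg_zero_of_no_influence [Fintype S] [Fintype D] [Nonempty D]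
    (P : S → ℝ) (hP : IsDist P) (hPpos : ∀ s, 0 < P s)
    (U : S → D → ℝ) (hU : ∀ s, ∀ d d' : D, U s d = U s d')
    (pol : S → D → ℝ) (hpol : IsPolicy pol) :
    MEG P U pol = 0 := by
  classical
  set n : ℝ := (Fintype.card D : ℝ) with hn_def
  have hn : (0:ℝ) < n := by positivity
  set u : S → D → ℝ := fun _ _ => n⁻¹ with hu_def
  have hu : IsPolicy u := by
    intro s
    constructor
    · intro d; positivity
    · simp [hu_def, hn_def]
  -- condEnt of uniform is log n
  have hCu : condEnt P u = Real.log n := by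
    unfold condEnt
    have hinner : ∀ s : S, (∑ d : D, u s d * Real.log (u s d)) = -Real.log n := by
      intro s
      simp only [hu_def]
      rw [Finset.sum_const, Finset.card_univ, Real.log_inv, nsmul_eq_mul, ← hn_def]
      field_simp
    calc -∑ s, P s * ∑ d, u s d * Real.log (u s d)
        = -∑ s, P s * (-Real.log n) := by
          rw [Finset.sum_congr rfl fun s _ => by rw [hinner s]]
      _ = ∑ s, P s * Real.log n := by
          simp [mul_neg, Finset.sum_neg_distrib]
      _ = Real.log n := by rw [← Finset.sum_mul, hP.2, one_mul]
  -- entropy bound for any policy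
  have hbound : ∀ q : S → D → ℝ, IsPolicy q → condEnt P q ≤ Real.log n := by
    intro q hq
    unfold condEnt
    have hstep : ∀ s : S, P s * (-Real.log n) ≤ P s * ∑ d, q s d * Real.log (q s d) := by
      intro s
      apply mul_le_mul_of_nonneg_left _ (hPpos s).le
      have h := ent_le_log_card' (q s) (hq s).1 (hq s).2
      have hrw : ∑ d, Real.negMulLog (q s d) = -∑ d, q s d * Real.log (q s d) := by
        simp [Real.negMulLog, neg_mul, Finset.sum_neg_distrib]
      rw [hrw] at h
      linarith
    have := Finset.sum_le_sum (fun s (_ : s ∈ Finset.univ) => hstep s)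
    rw [← Finset.sum_mul, hP.2, one_mul] at this
    linarith
  -- expUtil is the same for all policies
  have hEU : ∀ q : S → D → ℝ, IsPolicy q →
      expUtil P q U = ∑ s, P s * U s (Classical.arbitrary D) := by
    intro q hq
    unfold expUtil
    congr 1; funext s
    congr 1
    calc ∑ d, q s d * U s d = ∑ d, q s d * U s (Classical.arbitrary D) := by
          exact Finset.sum_congr rfl fun d _ => by rw [hU s d (Classical.arbitrary D)]
      _ = (∑ d, q s d) * U s (Classical.arbitrary D) := by rw [Finset.sum_mul]
      _ = U s (Classical.arbitrary D) := by rw [(hq s).2, one_mul]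
  -- maxentSet = {u}
  have hset : maxentSet P U = {u} := by
    ext q1
    constructor
    · rintro ⟨hq1, hmax⟩
      have hge : condEnt P u ≤ condEnt P q1 :=
        hmax u hu (by rw [hEU u hu, hEU q1 hq1])
      rw [hCu] at hge
      -- per-state entropy attains log n
      have hterm : ∀ s : S, 0 ≤ P s * (Real.log n - (-∑ d, q1 s d * Real.log (q1 s d))) := by
        intro s
        apply mul_nonneg (hPpos s).le
        have h := ent_le_log_card' (q1 s) (hq1 s).1 (hq1 s).2
        have hrw : ∑ d, Real.negMulLog (q1 s d) = -∑ d, q1 s d * Real.log (q1 s d) := by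
          simp [Real.negMulLog, neg_mul, Finset.sum_neg_distrib]
        rw [hrw] at h
        linarith
      have hsum0 : ∑ s, P s * (Real.log n - (-∑ d, q1 s d * Real.log (q1 s d))) ≤ 0 := by
        have : ∑ s, P s * (Real.log n - (-∑ d, q1 s d * Real.log (q1 s d)))
            = Real.log n - condEnt P q1 := by
          unfold condEnt
          simp only [sub_neg_eq_add, mul_add]
          rw [Finset.sum_add_distrib, ← Finset.sum_mul, hP.2, one_mul]
        rw [this]; linarith
      have hzero : ∀ s ∈ Finset.univ, P s * (Real.log n - (-∑ d, q1 s d * Real.log (q1 s d))) = 0 := by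
        rw [← Finset.sum_eq_zero_iff_of_nonneg (fun s _ => hterm s)]
        exact le_antisymm hsum0 (Finset.sum_nonneg (fun s _ => hterm s))
      have huni : ∀ s d, q1 s d = n⁻¹ := by
        intro s
        have h0 := hzero s (Finset.mem_univ s)
        have hEnt : Real.log n ≤ ∑ d, Real.negMulLog (q1 s d) := by
          have hrw : ∑ d, Real.negMulLog (q1 s d) = -∑ d, q1 s d * Real.log (q1 s d) := by
            simp [Real.negMulLog, neg_mul, Finset.sum_neg_distrib]
          have := mul_eq_zero.mp h0
          rcases this with h | h
          · exact absurd h (hPpos s).ne'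
          · rw [hrw]; linarith [sub_eq_zero.mp h]
        exact uniform_of_log_card_le_ent (q1 s) (hq1 s).1 (hq1 s).2 hEnt
      funext s d
      exact huni s d
    · rintro rfl
      exact ⟨hu, fun q2 hq2 _ => (hbound q2 hq2).trans hCu.ge⟩
  -- predAcc of uniform is 0
  have hPA : predAcc P pol u = 0 := by
    unfold predAcc
    have : ∀ s d, pol s d * (Real.log (u s d) + Real.log (Fintype.card D)) = 0 := by
      intro s d
      simp [hu_def, Real.log_inv, hn_def]
    apply Finset.sum_eq_zero
    intro s _
    rw [Finset.sum_congr rfl (fun d _ => this s d)]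
    simp
  unfold MEG
  rw [hset]
  have : {x | ∃ q1 ∈ ({u} : Set (S → D → ℝ)), x = predAcc P pol q1} = {(0:ℝ)} := by
    ext x
    simp [hPA]
  rw [this, csSup_singleton]
end

section
/- The derivative of the expected utility of the Boltzmann policy with respect to the rationality parameter is nonnegative: d/dβ E_{π_β}[U] = Σ_s P(s)·Var_{π_β(·|s)}(U(s,·)) ≥ 0. Hence β ↦ E_{π_β}[U] is monotone nondecreasing. -/
open Finset Real

variable {S D : Type*}

/-- The Boltzmann (soft-optimal) policy with rationality parameter `β` for utility `U`. -/
noncomputable def boltz [Fintype D] (U : S → D → ℝ) (β : ℝ) (s : S) (d : D) : ℝ :=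
  Real.exp (β * U s d) / ∑ d', Real.exp (β * U s d')

lemma boltz_isDist [Fintype D] [Nonempty D] (U : S → D → ℝ) (β : ℝ) (s : S) :
    IsDist (boltz U β s) := by
  have hZ : (0:ℝ) < ∑ d', Real.exp (β * U s d') :=
    Finset.sum_pos (fun d _ => Real.exp_pos _) Finset.univ_nonempty
  constructor
  · intro d; exact div_nonneg (Real.exp_pos _).le hZ.le
  · simp only [boltz]; rw [← Finset.sum_div, div_self hZ.ne']

lemma var_nonneg [Fintype D] (q : D → ℝ) (hq : IsDist q) (u : D → ℝ) :
    0 ≤ ∑ d, q d * (u d) ^ 2 - (∑ d, q d * u d) ^ 2 := by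
  have h := Finset.sum_mul_sq_le_sq_mul_sq Finset.univ
    (fun d => Real.sqrt (q d)) (fun d => Real.sqrt (q d) * u d)
  have e1 : ∀ d : D, Real.sqrt (q d) * (Real.sqrt (q d) * u d) = q d * u d := by
    intro d; rw [← mul_assoc, Real.mul_self_sqrt (hq.1 d)]
  have e2 : ∀ d : D, Real.sqrt (q d) ^ 2 = q d := fun d => Real.sq_sqrt (hq.1 d)
  have e3 : ∀ d : D, (Real.sqrt (q d) * u d) ^ 2 = q d * u d ^ 2 := by
    intro d; rw [mul_pow, e2]
  simp only [e1, e2, e3, hq.2, one_mul] at h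
  linarith

lemma boltz_state_hasDerivAt [Fintype D] [Nonempty D] (U : S → D → ℝ) (s : S) (β : ℝ) :
    HasDerivAt (fun b => ∑ d, boltz U b s d * U s d)
      (∑ d, boltz U β s d * (U s d) ^ 2 - (∑ d, boltz U β s d * U s d) ^ 2) β := by
  have hZ : ∀ b : ℝ, (0:ℝ) < ∑ d', Real.exp (b * U s d') :=
    fun b => Finset.sum_pos (fun d _ => Real.exp_pos _) Finset.univ_nonempty
  have hNd : HasDerivAt (fun b => ∑ d, Real.exp (b * U s d) * U s d)
      (∑ d, Real.exp (β * U s d) * U s d * U s d) β :=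
    HasDerivAt.fun_sum fun d _ => ((hasDerivAt_mul_const (U s d)).exp).mul_const (U s d)
  have hZd : HasDerivAt (fun b => ∑ d', Real.exp (b * U s d'))
      (∑ d', Real.exp (β * U s d') * U s d') β :=
    HasDerivAt.fun_sum fun d _ => (hasDerivAt_mul_const (U s d)).exp
  have h := hNd.div hZd (hZ β).ne'
  have hfun : (fun b => ∑ d, boltz U b s d * U s d)
      = fun b => (∑ d, Real.exp (b * U s d) * U s d) / ∑ d', Real.exp (b * U s d') := by
    funext b
    rw [Finset.sum_div]
    exact Finset.sum_congr rfl fun d _ => by rw [boltz, div_mul_eq_mul_div]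
  have hsum2 : ∑ d, boltz U β s d * (U s d) ^ 2
      = (∑ d, Real.exp (β * U s d) * U s d * U s d) / ∑ d', Real.exp (β * U s d') := by
    rw [Finset.sum_div]
    exact Finset.sum_congr rfl fun d _ => by rw [boltz, div_mul_eq_mul_div, sq, mul_assoc]
  have hsum1 : ∑ d, boltz U β s d * U s d
      = (∑ d, Real.exp (β * U s d) * U s d) / ∑ d', Real.exp (β * U s d') := by
    rw [Finset.sum_div]
    exact Finset.sum_congr rfl fun d _ => by rw [boltz, div_mul_eq_mul_div]
  rw [hfun]
  refine h.congr_deriv ?_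
  rw [hsum1, hsum2]
  field_simp

/-- the derivative in `β` of the expected utility of the Boltzmann policy is
the `P`-average of the variance of `U(s,·)` under `π_β(·|s)`, hence nonnegative, so
`β ↦ E_{π_β}[U]` is monotone nondecreasing. -/
theorem boltz_expUtil_deriv_nonneg [Fintype S] [Fintype D] [Nonempty D]
    (P : S → ℝ) (hP : IsDist P) (U : S → D → ℝ) :
    (∀ β : ℝ, HasDerivAt (fun b => expUtil P (boltz U b) U)
      (∑ s, P s * (∑ d, boltz U β s d * (U s d) ^ 2 - (∑ d, boltz U β s d * U s d) ^ 2)) β) ∧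
    (∀ β : ℝ, 0 ≤ ∑ s, P s *
      (∑ d, boltz U β s d * (U s d) ^ 2 - (∑ d, boltz U β s d * U s d) ^ 2)) ∧
    Monotone (fun β => expUtil P (boltz U β) U) := by
  have hderiv : ∀ β : ℝ, HasDerivAt (fun b => expUtil P (boltz U b) U)
      (∑ s, P s * (∑ d, boltz U β s d * (U s d) ^ 2 - (∑ d, boltz U β s d * U s d) ^ 2)) β := by
    intro β
    have : HasDerivAt (fun b => ∑ s, P s * ∑ d, boltz U b s d * U s d)
        (∑ s, P s * (∑ d, boltz U β s d * (U s d) ^ 2 - (∑ d, boltz U β s d * U s d) ^ 2)) β :=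
      HasDerivAt.fun_sum fun s _ => (boltz_state_hasDerivAt U s β).const_mul (P s)
    exact this
  have hnn : ∀ β : ℝ, 0 ≤ ∑ s, P s *
      (∑ d, boltz U β s d * (U s d) ^ 2 - (∑ d, boltz U β s d * U s d) ^ 2) := by
    intro β
    refine Finset.sum_nonneg fun s _ => mul_nonneg (hP.1 s) ?_
    exact var_nonneg _ (boltz_isDist U β s) (U s)
  refine ⟨hderiv, hnn, ?_⟩
  have hdiff : Differentiable ℝ (fun β => expUtil P (boltz U β) U) :=
    fun β => (hderiv β).differentiableAt
  refine monotone_of_deriv_nonneg hdiff fun β => ?_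
  rw [(hderiv β).deriv]
  exact hnn β
end
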